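/- Let A, B be strings of lengths m and n, σ a character, K'' the all scores matrix of Aσ (σ appended to A) and B, and Diff = K'' − K. Assume every row and every column of K□ contains at most one nonzero entry and every nonzero entry of K□ equals 1. Then for all 0 ≤ i ≤ j ≤ n: Diff[i,j] = 1 if and only if k = prevmatch(j,σ,B) > −∞, every column j' with k ≤ j' ≤ j of K□ contains exactly one pivotal point, and i is strictly less than the minimum row index among all pivotal points of K□ in columns k,…,j. -/
import Mathlib


variable {α : Type*}

/-- LCS of two lists: the maximum length of a common sublist. -/
noncomputable def LCS (X Y : List α) : ℕ :=
  sSup {k | ∃ Z : List α, Z.length = k ∧ Z.Sublist X ∧ Z.Sublist Y}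

/-- `substr S i j` is S[i..j]: the characters of S at (1-based) positions i+1,…,j. -/
def substr (S : List α) (i j : ℕ) : List α := (S.take j).drop i

/-- The density matrix D□ of a matrix D. -/
def density (D : ℕ → ℕ → ℤ) (i j : ℕ) : ℤ :=
  D i j + D (i - 1) (j - 1) - D (i - 1) j - D i (j - 1)

/-- The all scores matrix K of A and B: K[i,j] = LCS(B[i..j], A) if i ≤ j, else j - i. -/
noncomputable def Kmat (A B : List α) (i j : ℕ) : ℤ :=
  if i ≤ j then (LCS (substr B i j) A : ℤ) else (j : ℤ) - (i : ℤ)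

/-- The all scores matrix P of A and B: P[i,j] = LCS(B[i..n], A[0..j]). -/
noncomputable def Pmat (A B : List α) (i j : ℕ) : ℤ :=
  (LCS (substr B i B.length) (substr A 0 j) : ℤ)

/-- nextmatch(i,σ,B): minimum (1-based) position i' with i < i' ≤ |B| and B[i'] = σ; ⊤ (∞) if none. -/
noncomputable def nextmatch (i : ℕ) (σ : α) (B : List α) : ℕ∞ :=
  sInf {k : ℕ∞ | ∃ k' : ℕ, k = (k' : ℕ∞) ∧ i < k' ∧ k' ≤ B.length ∧ B[k' - 1]? = some σ}

/-- prevmatch(j,σ,B): maximum (1-based) position i' with 1 ≤ i' ≤ j and B[i'] = σ; ⊥ (−∞) if none. -/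
noncomputable def prevmatch (j : ℕ) (σ : α) (B : List α) : WithBot ℕ :=
  sSup {k : WithBot ℕ | ∃ k' : ℕ, k = (k' : WithBot ℕ) ∧ 1 ≤ k' ∧ k' ≤ j ∧ B[k' - 1]? = some σ}

/-! ### Auxiliary lemmas about LCS -/

lemma lcs_bddAbove (X Y : List α) :
    BddAbove {k | ∃ Z : List α, Z.length = k ∧ Z.Sublist X ∧ Z.Sublist Y} :=
  ⟨X.length, fun _ ⟨_, hZ, h1, _⟩ => hZ ▸ h1.length_le⟩

lemma lcs_ge {X Y Z : List α} (h1 : Z.Sublist X) (h2 : Z.Sublist Y) :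
    Z.length ≤ LCS X Y :=
  le_csSup (lcs_bddAbove X Y) ⟨Z, rfl, h1, h2⟩

lemma lcs_exists (X Y : List α) :
    ∃ Z : List α, Z.length = LCS X Y ∧ Z.Sublist X ∧ Z.Sublist Y := by
  have h0 : (0:ℕ) ∈ {k | ∃ Z : List α, Z.length = k ∧ Z.Sublist X ∧ Z.Sublist Y} :=
    ⟨[], rfl, List.nil_sublist _, List.nil_sublist _⟩
  exact Nat.sSup_mem ⟨0, h0⟩ (lcs_bddAbove X Y)

lemma lcs_nil (Y : List α) : LCS ([] : List α) Y = 0 := by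
  have h : {k | ∃ Z : List α, Z.length = k ∧ Z.Sublist ([] : List α) ∧ Z.Sublist Y} = {0} := by
    ext k
    constructor
    · rintro ⟨Z, hZ, h1, -⟩
      rw [List.sublist_nil] at h1
      simp [← hZ, h1]
    · rintro rfl
      exact ⟨[], rfl, List.nil_sublist _, List.nil_sublist _⟩
  rw [LCS, h, csSup_singleton]

lemma lcs_mono_left {X X' : List α} (Y : List α) (h : X.Sublist X') :
    LCS X Y ≤ LCS X' Y := by
  obtain ⟨Z, hZ, h1, h2⟩ := lcs_exists X Y
  exact hZ ▸ lcs_ge (h1.trans h) h2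

lemma lcs_snoc_right_le (X Y : List α) (c : α) :
    LCS X (Y ++ [c]) ≤ LCS X Y + 1 := by
  obtain ⟨Z, hZ, h1, h2⟩ := lcs_exists X (Y ++ [c])
  rw [List.sublist_append_iff] at h2
  obtain ⟨Z₁, Z₂, rfl, hZ₁, hZ₂⟩ := h2
  rw [List.sublist_singleton] at hZ₂
  have hZ₁X : Z₁.Sublist X := (List.sublist_append_left Z₁ Z₂).trans h1
  rcases hZ₂ with rfl | rfl
  · rw [← hZ]
    simpa using Nat.le_succ_of_le (lcs_ge hZ₁X hZ₁)
  · rw [← hZ]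
    simpa using Nat.add_le_add_right (lcs_ge hZ₁X hZ₁) 1

/-! ### Auxiliary lemmas about substr -/

lemma substr_nil (B : List α) (i : ℕ) : substr B i i = [] :=
  List.drop_eq_nil_of_le (by simp [List.length_take])

lemma substr_length (B : List α) {i j : ℕ} (hij : i ≤ j) (hj : j ≤ B.length) :
    (substr B i j).length = j - i := by
  simp only [substr, List.length_drop, List.length_take]
  omega

lemma substr_prefix (B : List α) (i : ℕ) {p j : ℕ} (hpj : p ≤ j) :
    substr B i p <+: substr B i j := by
  unfold substr
  have h : B.take p = (B.take j).take p := by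
    rw [List.take_take, min_eq_left hpj]
  rw [h]
  exact (List.take_prefix p (B.take j)).drop i

lemma substr_sublist (B : List α) (i : ℕ) {p j : ℕ} (hpj : p ≤ j) :
    (substr B i p).Sublist (substr B i j) := (substr_prefix B i hpj).sublist

lemma substr_snoc (B : List α) {i p : ℕ} {c : α} (hip : i < p) (hpn : p ≤ B.length)
    (hc : B[p-1]? = some c) :
    substr B i p = substr B i (p-1) ++ [c] := by
  unfold substr
  have hp : p = (p-1) + 1 := by omega
  rw [hp, List.take_succ]
  have h1 : p - 1 + 1 - 1 = p - 1 := by omega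
  rw [h1, hc]
  rw [List.drop_append]
  have h2 : (B.take (p-1)).length = p - 1 := by
    rw [List.length_take]; omega
  rw [h2]
  have h3 : i - (p-1) = 0 := by omega
  rw [h3]
  rfl

lemma substr_take (B : List α) {i j ℓ : ℕ} (h : i + ℓ ≤ j) :
    (substr B i j).take ℓ = substr B i (i + ℓ) := by
  unfold substr
  rw [List.drop_take, List.drop_take, List.take_take]
  congr 1
  omega

/-! ### Auxiliary lemmas about Kmat -/

lemma Kmat_self (A B : List α) (j : ℕ) : Kmat A B j j = 0 := by
  rw [Kmat, if_pos (le_refl j), substr_nil, lcs_nil]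
  rfl

lemma Kmat_lt (A B : List α) {i j : ℕ} (h : j < i) :
    Kmat A B i j = (j : ℤ) - (i : ℤ) := if_neg (by omega)

lemma Kmat_pred (A B : List α) {j : ℕ} (h : 1 ≤ j) : Kmat A B j (j-1) = -1 := by
  rw [Kmat_lt A B (by omega)]
  omega

lemma Kmat_mono_col (A B : List α) {i q j : ℕ} (hiq : i ≤ q) (hqj : q ≤ j) :
    Kmat A B i q ≤ Kmat A B i j := by
  rw [Kmat, if_pos hiq, Kmat, if_pos (hiq.trans hqj)]
  exact_mod_cast lcs_mono_left A (substr_sublist B i hqj)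

/-- the density vanishes strictly below the diagonal -/
lemma densLT (A B : List α) {i' j' : ℕ} (h1 : 1 ≤ j') (h2 : j' < i') :
    density (Kmat A B) i' j' = 0 := by
  unfold density
  have e1 : Kmat A B i' j' = (j' : ℤ) - i' := Kmat_lt A B h2
  have e2 : Kmat A B i' (j'-1) = ((j'-1 : ℕ) : ℤ) - i' := Kmat_lt A B (by omega)
  have e3 : Kmat A B (i'-1) (j'-1) = ((j'-1 : ℕ) : ℤ) - ((i'-1 : ℕ) : ℤ) :=
    Kmat_lt A B (by omega)
  by_cases hc : i' = j' + 1
  · have e4 : Kmat A B (i'-1) j' = 0 := by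
      have : i' - 1 = j' := by omega
      rw [this, Kmat_self]
    rw [e1, e2, e3, e4]
    have hj : ((j'-1 : ℕ) : ℤ) = (j' : ℤ) - 1 := by omega
    rw [hj]
    have hi : ((i'-1 : ℕ) : ℤ) = (i' : ℤ) - 1 := by omega
    rw [hi]
    omega
  · have e4 : Kmat A B (i'-1) j' = (j' : ℤ) - ((i'-1 : ℕ) : ℤ) := Kmat_lt A B (by omega)
    rw [e1, e2, e3, e4]
    omega

/-- Column lemma: the column increments of `Kmat` are 0 or 1, and an increment
at `(i, j')` is 0 iff column `j'` has a pivotal point strictly below row `i`. -/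
lemma colLem (A B : List α) (n : ℕ)
    (hVal : ∀ i, 1 ≤ i → i ≤ n → ∀ j, 1 ≤ j → j ≤ n →
      density (Kmat A B) i j ≠ 0 → density (Kmat A B) i j = 1) :
    ∀ t i j', j' - i = t → i ≤ j' → 1 ≤ j' → j' ≤ n →
      ((Kmat A B i j' - Kmat A B i (j'-1) = 0 ∨ Kmat A B i j' - Kmat A B i (j'-1) = 1) ∧
       (Kmat A B i j' - Kmat A B i (j'-1) = 0 ↔
          ∃ r, i < r ∧ r ≤ j' ∧ density (Kmat A B) r j' ≠ 0)) := by
  intro t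
  induction t with
  | zero =>
    intro i j' ht hij h1 hn
    have hij' : i = j' := by omega
    subst hij'
    have hv : Kmat A B i i - Kmat A B i (i-1) = 1 := by
      rw [Kmat_self, Kmat_pred A B h1]; ring
    refine ⟨Or.inr hv, ?_, ?_⟩
    · intro h; rw [hv] at h; exact absurd h one_ne_zero
    · rintro ⟨r, hr1, hr2, -⟩; omega
  | succ t ih =>
    intro i j' ht hij h1 hn
    have hij' : i < j' := by omega
    have key : density (Kmat A B) (i+1) j' =
        (Kmat A B (i+1) j' - Kmat A B (i+1) (j'-1)) -
        (Kmat A B i j' - Kmat A B i (j'-1)) := by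
      simp only [density, Nat.add_sub_cancel]; ring
    obtain ⟨ihor, ihiff⟩ := ih (i+1) j' (by omega) (by omega) h1 hn
    have hnn : 0 ≤ Kmat A B i j' - Kmat A B i (j'-1) := by
      have := Kmat_mono_col A B (i := i) (q := j'-1) (j := j') (by omega) (by omega)
      linarith
    by_cases hd : density (Kmat A B) (i+1) j' = 0
    · have heq : Kmat A B i j' - Kmat A B i (j'-1) =
          Kmat A B (i+1) j' - Kmat A B (i+1) (j'-1) := by
        rw [key] at hd; linarith
      rw [heq]
      refine ⟨ihor, ?_⟩
      rw [ihiff]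
      constructor
      · rintro ⟨r, hr1, hr2, hr3⟩; exact ⟨r, by omega, hr2, hr3⟩
      · rintro ⟨r, hr1, hr2, hr3⟩
        have hne : r ≠ i+1 := fun h => hr3 (h ▸ hd)
        exact ⟨r, by omega, hr2, hr3⟩
    · have hd1 : density (Kmat A B) (i+1) j' = 1 :=
        hVal (i+1) (by omega) (by omega) j' h1 hn hd
      have hD1 : Kmat A B (i+1) j' - Kmat A B (i+1) (j'-1) = 1 := by
        rcases ihor with h | h
        · exfalso; rw [key, h] at hd1; linarith
        · exact h
      have hD0 : Kmat A B i j' - Kmat A B i (j'-1) = 0 := by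
        rw [key, hD1] at hd1; linarith
      exact ⟨Or.inl hD0, iff_of_true hD0 ⟨i+1, Nat.lt_succ_self i, by omega, hd⟩⟩

/-- Row lemma: `K[i,q] = K[i,j]` iff all column increments in between vanish. -/
lemma rowLem (A B : List α) :
    ∀ t i q j, j - q = t → i ≤ q → q ≤ j →
      (Kmat A B i q ≤ Kmat A B i j ∧
       (Kmat A B i q = Kmat A B i j ↔
          ∀ j', q < j' → j' ≤ j → Kmat A B i j' - Kmat A B i (j'-1) = 0)) := by
  intro t
  induction t with
  | zero =>
    intro i q j ht hiq hqj
    have : q = j := by omega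
    subst this
    exact ⟨le_refl _, iff_of_true rfl (fun j' h1 h2 => by omega)⟩
  | succ t ih =>
    intro i q j ht hiq hqj
    have hqj' : q < j := by omega
    obtain ⟨ihle, ihiff⟩ := ih i q (j-1) (by omega) hiq (by omega)
    have hstep : Kmat A B i (j-1) ≤ Kmat A B i j :=
      Kmat_mono_col A B (by omega : i ≤ j-1) (by omega)
    refine ⟨ihle.trans hstep, ?_, ?_⟩
    · intro h
      have h1 : Kmat A B i q = Kmat A B i (j-1) :=
        le_antisymm ihle (by rw [h]; exact hstep)
      intro j' hqj1 hj'j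
      by_cases hj' : j' = j
      · subst hj'
        have h2 : Kmat A B i q = Kmat A B i j' := h
        have h3 : j' - 1 ≤ j' := by omega
        rw [← h1] at hstep ⊢
        linarith
      · exact ihiff.mp h1 j' hqj1 (by omega)
    · intro h
      have h1 : Kmat A B i q = Kmat A B i (j-1) :=
        ihiff.mpr (fun j' a b => h j' a (by omega))
      have h2 := h j (by omega) (le_refl j)
      linarith

/-! ### prevmatch lemmas -/

lemma prevmatch_eq_iff (B : List α) (j k : ℕ) (σ : α) :
    prevmatch j σ B = (k : WithBot ℕ) ↔
      (1 ≤ k ∧ k ≤ j ∧ B[k-1]? = some σ ∧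
        ∀ p, 1 ≤ p → p ≤ j → B[p-1]? = some σ → p ≤ k) := by
  classical
  set T : Set ℕ := {p | 1 ≤ p ∧ p ≤ j ∧ B[p-1]? = some σ} with hTdef
  have hTbdd : BddAbove T := ⟨j, fun x hx => hx.2.1⟩
  set S : Set (WithBot ℕ) :=
    {k | ∃ k' : ℕ, k = (k' : WithBot ℕ) ∧ 1 ≤ k' ∧ k' ≤ j ∧ B[k'-1]? = some σ} with hSdef
  have hSpre : (fun (a : ℕ) => (a : WithBot ℕ)) ⁻¹' S = T := by
    ext x
    simp only [Set.mem_preimage, hSdef, Set.mem_setOf_eq, hTdef]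
    constructor
    · rintro ⟨k', hk', h1, h2, h3⟩
      rw [Nat.cast_withBot, Nat.cast_withBot, WithBot.coe_inj] at hk'
      exact hk' ▸ ⟨h1, h2, h3⟩
    · rintro ⟨h1, h2, h3⟩
      exact ⟨x, rfl, h1, h2, h3⟩
  have hprev : prevmatch j σ B = sSup S := rfl
  by_cases hne : T.Nonempty
  · have hSne : ¬ S ⊆ {⊥} := by
      obtain ⟨p, hp⟩ := hne
      intro hsub
      have hpS : (p : WithBot ℕ) ∈ S := ⟨p, rfl, hp.1, hp.2.1, hp.2.2⟩
      have := hsub hpS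
      rw [Set.mem_singleton_iff, Nat.cast_withBot] at this
      exact WithBot.coe_ne_bot this
    have hSbdd : BddAbove S := by
      refine ⟨(j : WithBot ℕ), ?_⟩
      rintro x ⟨k', rfl, -, hk2, -⟩
      rw [Nat.cast_withBot, Nat.cast_withBot]
      exact_mod_cast hk2
    have hcoe : sSup S = ((sSup T : ℕ) : WithBot ℕ) := by
      rw [WithBot.sSup_eq hSne hSbdd, Nat.cast_withBot]
      congr 1
      rw [← hSpre]
      rfl
    rw [hprev, hcoe]
    constructor
    · intro h
      rw [Nat.cast_withBot, Nat.cast_withBot, WithBot.coe_inj] at h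
      have hmem : sSup T ∈ T := Nat.sSup_mem hne hTbdd
      rw [h] at hmem
      refine ⟨hmem.1, hmem.2.1, hmem.2.2, ?_⟩
      intro p h1 h2 h3
      rw [← h]
      exact le_csSup hTbdd ⟨h1, h2, h3⟩
    · rintro ⟨h1, h2, h3, h4⟩
      rw [Nat.cast_withBot, Nat.cast_withBot, WithBot.coe_inj]
      refine le_antisymm (csSup_le hne ?_) (le_csSup hTbdd ⟨h1, h2, h3⟩)
      rintro x ⟨hx1, hx2, hx3⟩
      exact h4 x hx1 hx2 hx3
  · have hSempty : S = ∅ := by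
      ext x
      simp only [hSdef, Set.mem_setOf_eq, Set.mem_empty_iff_false, iff_false]
      rintro ⟨k', rfl, h1, h2, h3⟩
      exact hne ⟨k', h1, h2, h3⟩
    rw [hprev, hSempty, WithBot.sSup_empty]
    constructor
    · intro h
      exfalso
      rw [Nat.cast_withBot] at h
      exact WithBot.coe_ne_bot h.symm
    · rintro ⟨h1, h2, h3, -⟩
      exact absurd ⟨h1, h2, h3⟩ (fun hk => hne ⟨k, hk⟩)

lemma prevmatch_exists (B : List α) {j p : ℕ} (σ : α)
    (h1 : 1 ≤ p) (h2 : p ≤ j) (h3 : B[p-1]? = some σ) :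
    ∃ k : ℕ, prevmatch j σ B = (k : WithBot ℕ) := by
  classical
  have hne : Set.Nonempty {q : ℕ | 1 ≤ q ∧ q ≤ j ∧ B[q-1]? = some σ} := ⟨p, h1, h2, h3⟩
  have hbdd : BddAbove {q : ℕ | 1 ≤ q ∧ q ≤ j ∧ B[q-1]? = some σ} := ⟨j, fun x hx => hx.2.1⟩
  have hmem := Nat.sSup_mem hne hbdd
  refine ⟨sSup {q : ℕ | 1 ≤ q ∧ q ≤ j ∧ B[q-1]? = some σ}, ?_⟩
  rw [prevmatch_eq_iff]
  exact ⟨hmem.1, hmem.2.1, hmem.2.2, fun q a b c => le_csSup hbdd ⟨a, b, c⟩⟩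

/-! ### the middle characterization -/

lemma mid_iff (A B : List α) (σ : α) {i j : ℕ} (hij : i ≤ j) (hj : j ≤ B.length) :
    Kmat (A ++ [σ]) B i j - Kmat A B i j = 1 ↔
      ∃ p, i < p ∧ p ≤ j ∧ B[p-1]? = some σ ∧ Kmat A B i (p-1) = Kmat A B i j := by
  have hK'' : Kmat (A ++ [σ]) B i j = (LCS (substr B i j) (A ++ [σ]) : ℤ) :=
    if_pos hij
  have hK : Kmat A B i j = (LCS (substr B i j) A : ℤ) := if_pos hij
  constructor
  · intro h
    rw [hK'', hK] at h
    have hL' : LCS (substr B i j) (A ++ [σ]) = LCS (substr B i j) A + 1 := by omega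
    obtain ⟨Z, hZlen, hZX, hZA⟩ := lcs_exists (substr B i j) (A ++ [σ])
    rw [List.sublist_append_iff] at hZA
    obtain ⟨Z₁, Z₂, rfl, hZ₁, hZ₂⟩ := hZA
    rw [List.sublist_singleton] at hZ₂
    rcases hZ₂ with rfl | rfl
    · exfalso
      rw [List.append_nil] at hZX hZlen
      have := lcs_ge hZX hZ₁
      omega
    · obtain ⟨R₁, R₂, hXeq, hZ₁R, hσR⟩ := List.append_sublist_iff.mp hZX
      rw [List.singleton_sublist] at hσR
      obtain ⟨s, t, rfl⟩ := List.append_of_mem hσR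
      have hX2 : substr B i j = (R₁ ++ s) ++ σ :: t := by
        rw [hXeq]; simp [List.append_assoc]
      have hXlen : (substr B i j).length = j - i := substr_length B hij hj
      have hWlen : (R₁ ++ s).length < j - i := by
        have h5 := congrArg List.length hX2
        rw [hXlen, List.length_append, List.length_cons] at h5
        omega
      set ℓ := (R₁ ++ s).length with hℓ
      refine ⟨i + ℓ + 1, by omega, by omega, ?_, ?_⟩
      · have h1 : (substr B i j)[ℓ]? = some σ := by
          rw [hX2, List.getElem?_append_right (le_refl _)]
          simp
        have h2 : (substr B i j)[ℓ]? = B[i + ℓ]? := by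
          show ((B.take j).drop i)[ℓ]? = _
          rw [List.getElem?_drop, List.getElem?_take]
          rw [if_pos (by omega)]
        have h3 : i + ℓ + 1 - 1 = i + ℓ := by omega
        rw [h3, ← h2, h1]
      · have h3 : i + ℓ + 1 - 1 = i + ℓ := by omega
        rw [h3]
        have hsub : substr B i (i + ℓ) = R₁ ++ s := by
          rw [← substr_take B (by omega : i + ℓ ≤ j), hX2]
          exact List.take_left' rfl
        have hle : LCS (substr B i (i+ℓ)) A ≤ LCS (substr B i j) A :=
          lcs_mono_left A (substr_sublist B i (by omega))
        have hge : LCS (substr B i j) A ≤ LCS (substr B i (i+ℓ)) A := by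
          rw [hsub]
          have hZ₁W : Z₁.Sublist (R₁ ++ s) := hZ₁R.trans (List.sublist_append_left R₁ s)
          have hg := lcs_ge hZ₁W hZ₁
          simp only [List.length_append, List.length_singleton] at hZlen
          omega
        rw [hK, Kmat, if_pos (by omega : i ≤ i + ℓ)]
        exact_mod_cast le_antisymm hle hge
  · rintro ⟨p, hip, hpj, hpσ, hKp⟩
    have h1 : i ≤ p - 1 := by omega
    rw [Kmat, if_pos h1, hK] at hKp
    have hLp : LCS (substr B i (p-1)) A = LCS (substr B i j) A := by exact_mod_cast hKp
    obtain ⟨Z, hZlen, hZB, hZA⟩ := lcs_exists (substr B i (p-1)) A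
    have hcat : (Z ++ [σ]).Sublist (substr B i j) := by
      have h2 : substr B i p = substr B i (p-1) ++ [σ] :=
        substr_snoc B hip (hpj.trans hj) hpσ
      have h4 : (Z ++ [σ]).Sublist (substr B i p) := by
        rw [h2]; exact hZB.append (List.Sublist.refl _)
      exact h4.trans (substr_sublist B i hpj)
    have hA' : (Z ++ [σ]).Sublist (A ++ [σ]) := hZA.append (List.Sublist.refl _)
    have hge : LCS (substr B i j) A + 1 ≤ LCS (substr B i j) (A ++ [σ]) := by
      have hg := lcs_ge hcat hA'
      simp only [List.length_append, List.length_singleton] at hg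
      omega
    have hle := lcs_snoc_right_le (substr B i j) A σ
    have heq : LCS (substr B i j) (A ++ [σ]) = LCS (substr B i j) A + 1 :=
      le_antisymm hle hge
    rw [hK'', hK, heq]
    push_cast
    ring

/-- Diff[i,j] = 1 iff k = prevmatch(j,σ,B) > −∞, every column
k,…,j of K□ contains exactly one pivotal point, and i is less than the minimum
row index among all pivotal points of K□ in columns k,…,j. -/
theorem stmt_11 {α : Type*} (A B : List α) (m n : ℕ)
    (hA : A.length = m) (hB : B.length = n) (σ : α)
    (hRow : ∀ i, 1 ≤ i → i ≤ n → ∀ j₁ j₂, 1 ≤ j₁ → j₁ ≤ n → 1 ≤ j₂ → j₂ ≤ n →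
      density (Kmat A B) i j₁ ≠ 0 → density (Kmat A B) i j₂ ≠ 0 → j₁ = j₂)
    (hCol : ∀ j, 1 ≤ j → j ≤ n → ∀ i₁ i₂, 1 ≤ i₁ → i₁ ≤ n → 1 ≤ i₂ → i₂ ≤ n →
      density (Kmat A B) i₁ j ≠ 0 → density (Kmat A B) i₂ j ≠ 0 → i₁ = i₂)
    (hVal : ∀ i, 1 ≤ i → i ≤ n → ∀ j, 1 ≤ j → j ≤ n →
      density (Kmat A B) i j ≠ 0 → density (Kmat A B) i j = 1) :
    ∀ i j : ℕ, i ≤ j → j ≤ n →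
      (Kmat (A ++ [σ]) B i j - Kmat A B i j = 1 ↔
        ∃ k : ℕ, prevmatch j σ B = (k : WithBot ℕ) ∧
          (∀ j', k ≤ j' → j' ≤ j →
            ∃ i', 1 ≤ i' ∧ i' ≤ n ∧ density (Kmat A B) i' j' ≠ 0) ∧
          (∀ i' j', k ≤ j' → j' ≤ j → 1 ≤ i' → i' ≤ n →
            density (Kmat A B) i' j' ≠ 0 → i < i')) := by
  intro i j hij hjn
  rw [mid_iff A B σ hij (by omega)]
  constructor
  · rintro ⟨p, hip, hpj, hpσ, hKp⟩
    obtain ⟨k, hk⟩ := prevmatch_exists B σ (by omega : 1 ≤ p) hpj hpσ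
    obtain ⟨hk1, hkj, hkσ, hkmax⟩ := (prevmatch_eq_iff B j k σ).mp hk
    have hpk : p ≤ k := hkmax p (by omega) hpj hpσ
    have hd := (rowLem A B (j - (p-1)) i (p-1) j rfl (by omega) (by omega)).2.mp hKp
    refine ⟨k, hk, ?_, ?_⟩
    · intro j' hkj' hj'j
      have hdj : Kmat A B i j' - Kmat A B i (j'-1) = 0 := hd j' (by omega) hj'j
      obtain ⟨r, hr1, hr2, hr3⟩ :=
        (colLem A B n hVal (j' - i) i j' rfl (by omega) (by omega) (by omega)).2.mp hdj
      exact ⟨r, by omega, by omega, hr3⟩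
    · intro i' j' hkj' hj'j hi'1 hi'n hdens
      have hdj : Kmat A B i j' - Kmat A B i (j'-1) = 0 := hd j' (by omega) hj'j
      obtain ⟨r, hr1, hr2, hr3⟩ :=
        (colLem A B n hVal (j' - i) i j' rfl (by omega) (by omega) (by omega)).2.mp hdj
      have heqr : i' = r :=
        hCol j' (by omega) (by omega) i' r hi'1 hi'n (by omega) (by omega) hdens hr3
      omega
  · rintro ⟨k, hk, hpiv, hmin⟩
    obtain ⟨hk1, hkj, hkσ, -⟩ := (prevmatch_eq_iff B j k σ).mp hk
    obtain ⟨r, hr1, hrn, hrd⟩ := hpiv k (le_refl k) hkj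
    have hrk : r ≤ k := by
      by_contra h
      exact hrd (densLT A B hk1 (by omega))
    have hik : i < r := hmin r k (le_refl k) hkj hr1 hrn hrd
    have hik' : i < k := by omega
    refine ⟨k, hik', hkj, hkσ, ?_⟩
    apply (rowLem A B (j - (k-1)) i (k-1) j rfl (by omega) (by omega)).2.mpr
    intro j' hkj' hj'j
    obtain ⟨r', hr'1, hr'n, hr'd⟩ := hpiv j' (by omega) hj'j
    have hr'j' : r' ≤ j' := by
      by_contra h
      exact hr'd (densLT A B (by omega) (by omega))
    have hir' : i < r' := hmin r' j' (by omega) hj'j hr'1 hr'n hr'd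
    exact (colLem A B n hVal (j' - i) i j' rfl (by omega) (by omega) (by omega)).2.mpr
      ⟨r', hir', hr'j', hr'd⟩
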